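/- arXiv:2007.01815 — 3 statements merged into one kernel-verified Lean document; each statement's English description precedes it below -/
import Mathlib

section
/- Let f(α) = aα + b with a ≥ 0 and g(β) = cβ + d with c ≤ 0, and suppose (a+1)(1-c) - 1 > 0. With T_α, T_β the tripoint coordinates as above, for every (α, β) ∈ ℝ² with α ≤ β, it holds that min(β - α, aα + b, cβ + d) ≤ (ad - bc)/((a+1)(1-c) - 1). -/
theorem tripoint_upper_bound (a b c d : ℝ) (ha : 0 ≤ a) (hc : c ≤ 0)
    (hK : (a + 1) * (1 - c) - 1 > 0) :
    ∀ α β : ℝ, α ≤ β →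
      min (β - α) (min (a * α + b) (c * β + d))
        ≤ (a * d - b * c) / ((a + 1) * (1 - c) - 1) := by
  intro α β hab
  set m := min (β - α) (min (a * α + b) (c * β + d)) with hm
  have h1 : m ≤ β - α := min_le_left _ _
  have h2 : m ≤ a * α + b := le_trans (min_le_right _ _) (min_le_left _ _)
  have h3 : m ≤ c * β + d := le_trans (min_le_right _ _) (min_le_right _ _)
  rw [le_div_iff₀ hK]
  nlinarith [mul_nonneg ha (neg_nonneg.mpr hc), mul_le_mul_of_nonneg_left h1 (mul_nonneg ha (neg_nonneg.mpr hc)), mul_le_mul_of_nonneg_left h2 (neg_nonneg.mpr hc), mul_le_mul_of_nonneg_left h3 ha]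
end

section
/- Let v, v' ∈ ℝⁿ with v'(i) ≥ 0 for all i, let η = ‖v' - v‖_∞, and let g ⊆ ℝⁿ be any set of the form of a box (product of intervals J_i). If 0 ≤ α ≤ β with β - α ≥ 2η and v + t·𝟙 ∈ g for all t ∈ [α, β] (where 𝟙 is the all-ones vector), then v' + t·𝟙 ∈ g for all t ∈ [α + η, β - η]. -/
theorem shrink_interval {n : ℕ} (J : Fin n → Set ℝ) (hJ : ∀ i, Convex ℝ (J i))
    (v v' : Fin n → ℝ) (hv' : ∀ i, 0 ≤ v' i) (α β : ℝ)
    (hα : 0 ≤ α) (hαβ : α ≤ β) (hlen : β - α ≥ 2 * dist v v')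
    (h : ∀ t ∈ Set.Icc α β, ∀ i, v i + t ∈ J i) :
    ∀ t ∈ Set.Icc (α + dist v v') (β - dist v v'), ∀ i, v' i + t ∈ J i := by
  intro t ht i
  have hd : dist (v i) (v' i) ≤ dist v v' := dist_le_pi_dist v v' i
  have habs : |v' i - v i| ≤ dist v v' := by
    rwa [abs_sub_comm, ← Real.dist_eq]
  rw [abs_le] at habs
  have hmem : t + (v' i - v i) ∈ Set.Icc α β := by
    constructor
    · linarith [ht.1]
    · linarith [ht.2]
  have := h _ hmem i
  have : v i + (t + (v' i - v i)) = v' i + t := by ring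
  rw [← this]
  exact h _ hmem i
end

section
/- Let g ⊆ ℝⁿ be a box (product of intervals). Define ν(v) = sup { β - α : 0 ≤ α ≤ β and v + t·𝟙 ∈ g for all t ∈ [α,β] } on the set S of valuations v where some such interval exists. Then ν is 2-Lipschitz on S with respect to the sup-norm: |ν(v) - ν(v')| ≤ 2‖v - v'‖_∞ for all v, v' ∈ S. -/
theorem nu_lipschitz {n : ℕ} (J : Fin n → Set ℝ) (hJ : ∀ i, Convex ℝ (J i)) :
    ∀ v v' : Fin n → ℝ,
      (∃ α β : ℝ, 0 ≤ α ∧ α ≤ β ∧ ∀ t ∈ Set.Icc α β, ∀ i, v i + t ∈ J i) →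
      (∃ α β : ℝ, 0 ≤ α ∧ α ≤ β ∧ ∀ t ∈ Set.Icc α β, ∀ i, v' i + t ∈ J i) →
      |sSup {l : ℝ | ∃ α β : ℝ, 0 ≤ α ∧ α ≤ β ∧ l = β - α ∧
            ∀ t ∈ Set.Icc α β, ∀ i, v i + t ∈ J i}
        - sSup {l : ℝ | ∃ α β : ℝ, 0 ≤ α ∧ α ≤ β ∧ l = β - α ∧
            ∀ t ∈ Set.Icc α β, ∀ i, v' i + t ∈ J i}|
        ≤ 2 * dist v v' := by
  -- The set of interval lengths for a valuation w
  set S : (Fin n → ℝ) → Set ℝ := fun w =>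
    {l : ℝ | ∃ α β : ℝ, 0 ≤ α ∧ α ≤ β ∧ l = β - α ∧
      ∀ t ∈ Set.Icc α β, ∀ i, w i + t ∈ J i} with hS
  -- zero membership
  have hzero : ∀ w : Fin n → ℝ,
      (∃ α β : ℝ, 0 ≤ α ∧ α ≤ β ∧ ∀ t ∈ Set.Icc α β, ∀ i, w i + t ∈ J i) →
      (0 : ℝ) ∈ S w := by
    rintro w ⟨α, β, h0, hab, hmem⟩
    exact ⟨α, α, h0, le_refl α, by ring, fun t ht i =>
      hmem t ⟨ht.1, ht.2.trans hab⟩ i⟩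
  -- shrinking lemma
  have shrink : ∀ w w' : Fin n → ℝ, ∀ l ∈ S w',
      l - 2 * dist w w' ≤ 0 ∨ l - 2 * dist w w' ∈ S w := by
    intro w w' l hl
    obtain ⟨α, β, h0, hab, hlab, hmem⟩ := hl
    set d := dist w w' with hd
    have hd0 : 0 ≤ d := dist_nonneg
    by_cases hc : β - d < α + d
    · left; rw [hlab]; linarith
    · right
      push_neg at hc
      refine ⟨α + d, β - d, by linarith, hc, by rw [hlab]; ring, ?_⟩
      intro t ht i
      have hdi : |w i - w' i| ≤ d := by
        have := dist_le_pi_dist w w' i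
        rwa [Real.dist_eq] at this
      have h1 := abs_le.mp hdi
      have : w i + t = w' i + (t + (w i - w' i)) := by ring
      rw [this]
      exact hmem _ ⟨by have := ht.1; linarith [h1.1, h1.2],
        by have := ht.2; linarith [h1.1, h1.2]⟩ i
    -- end shrink
  intro v v' hv hv'
  have h0v : (0 : ℝ) ∈ S v := hzero v hv
  have h0v' : (0 : ℝ) ∈ S v' := hzero v' hv'
  set d := dist v v' with hd
  have hd0 : 0 ≤ d := dist_nonneg
  -- If one set is unbounded, so is the other
  have unbdd : ∀ w w' : Fin n → ℝ, ¬ BddAbove (S w') → ¬ BddAbove (S w) := by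
    intro w w' hnb hb
    apply hnb
    obtain ⟨M, hM⟩ := hb
    refine ⟨max M 0 + 2 * dist w w', fun l hl => ?_⟩
    rcases shrink w w' l hl with h | h
    · have h2 : (0:ℝ) ≤ max M 0 := le_max_right M 0
      linarith
    · have h1 := hM h
      have h2 : M ≤ max M 0 := le_max_left M 0
      linarith
  by_cases hbv : BddAbove (S v)
  · have hbv' : BddAbove (S v') := by
      by_contra hnb
      exact unbdd v v' hnb hbv
    -- sSup nonneg
    have hsv : 0 ≤ sSup (S v) := le_csSup hbv h0v
    have hsv' : 0 ≤ sSup (S v') := le_csSup hbv' h0v'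
    have key : ∀ w w' : Fin n → ℝ, (0:ℝ) ∈ S w → BddAbove (S w) →
        0 ≤ sSup (S w) → sSup (S w') ≤ sSup (S w) + 2 * dist w w' := by
      intro w w' h0 hb hs
      apply Real.sSup_le
      · intro l hl
        rcases shrink w w' l hl with h | h
        · linarith
        · have := le_csSup hb h
          linarith
      · positivity
    have h1 := key v v' h0v hbv hsv
    have h2 := key v' v h0v' hbv' hsv'
    rw [dist_comm v' v] at h2
    rw [abs_le]
    constructor <;> linarith
  · have hbv' : ¬ BddAbove (S v') := unbdd v' v hbv
    rw [Real.sSup_of_not_bddAbove hbv, Real.sSup_of_not_bddAbove hbv']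
    simp
    positivity
end
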